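/- arXiv:1405.0507 — 2 statements merged into one kernel-verified Lean document; each statement's English description precedes it below -/
import Mathlib

section
/- For all integers m ≥ 1 and n ≥ 1, the neutrix limit as ε → 0⁺ of ∫_ε^1 t^{-m-1} (log t)^n dt equals -n!/m^{n+1}; that is, there exists a negligible function N(ε) such that ∫_ε^1 t^{-m-1} (log t)^n dt − N(ε) tends to -n!/m^{n+1} as ε → 0⁺. -/
open MeasureTheory Real Filter Set

/-- A negligible function: a finite real linear combination of `ε ↦ ε^λ (log ε)^k`
with `λ < 0` real and `k ∈ ℕ`, and `ε ↦ (log ε)^k` with `k ≥ 1`. -/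
def Negligible (N : ℝ → ℝ) : Prop :=
  ∃ (s : Finset (ℝ × ℕ)) (c : ℝ × ℕ → ℝ) (T : Finset ℕ) (d : ℕ → ℝ),
    (∀ p ∈ s, p.1 < 0) ∧ (∀ k ∈ T, 1 ≤ k) ∧
    ∀ ε : ℝ, N ε = (∑ p ∈ s, c p * ε ^ p.1 * Real.log ε ^ p.2) +
      ∑ k ∈ T, d k * Real.log ε ^ k

/-- `NeutrixLim F c` : the neutrix limit of `F ε` as `ε → 0⁺` is `c`, i.e. there is a
negligible function `N` with `F ε − N ε → c` as `ε → 0⁺`. -/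
def NeutrixLim (F : ℝ → ℝ) (c : ℝ) : Prop :=
  ∃ N : ℝ → ℝ, Negligible N ∧
    Tendsto (fun ε => F ε - N ε) (nhdsWithin 0 (Set.Ioi 0)) (nhds c)

lemma aux_deriv_v (m : ℕ) (hm : 1 ≤ m) {t : ℝ} (ht : 0 < t) :
    HasDerivAt (fun x : ℝ => x ^ (-(m:ℝ)) / (-(m:ℝ))) (t ^ (-(m:ℝ) - 1)) t := by
  have hm0 : (m:ℝ) ≠ 0 := by positivity
  have h := (Real.hasDerivAt_rpow_const (p := -(m:ℝ)) (Or.inl ht.ne')).div_const (-(m:ℝ))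
  rw [mul_div_cancel_left₀ _ (neg_ne_zero.mpr hm0)] at h
  exact h

lemma aux_integrable (a : ℝ) (k : ℕ) {ε : ℝ} (hε : 0 < ε) :
    IntervalIntegrable (fun t : ℝ => t ^ a * Real.log t ^ k) volume ε 1 := by
  apply ContinuousOn.intervalIntegrable
  intro x hx
  have hx0 : x ≠ 0 := (lt_of_lt_of_le (lt_min hε one_pos) hx.1).ne'
  exact (((Real.continuousAt_rpow_const x a (Or.inl hx0)).mul
    ((Real.continuousAt_log hx0).pow k)).continuousWithinAt)

lemma key (m : ℕ) (hm : 1 ≤ m) : ∀ n : ℕ, ∃ c : ℕ → ℝ, ∀ ε : ℝ, 0 < ε → ε < 1 →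
    ∫ t in ε..1, t ^ (-(m:ℝ) - 1) * Real.log t ^ n
      = ε ^ (-(m:ℝ)) * (∑ j ∈ Finset.range (n+1), c j * Real.log ε ^ j)
        - (n.factorial : ℝ) / (m:ℝ) ^ (n+1) := by
  have hm0 : (m:ℝ) ≠ 0 := by positivity
  intro n
  induction n with
  | zero =>
    refine ⟨fun _ => 1 / m, fun ε hε hε1 => ?_⟩
    have hsub : ∀ x ∈ uIcc ε 1, (0:ℝ) < x := fun x hx => lt_of_lt_of_le (lt_min hε one_pos) hx.1
    have := intervalIntegral.integral_eq_sub_of_hasDerivAt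
      (f := fun x : ℝ => x ^ (-(m:ℝ)) / (-(m:ℝ))) (f' := fun t => t ^ (-(m:ℝ) - 1))
      (fun x hx => aux_deriv_v m hm (hsub x hx)) ?_
    · have h1 : (1:ℝ) ^ (-(m:ℝ)) = 1 := Real.one_rpow _
      simp only [pow_zero, mul_one] at *
      rw [this, h1]
      simp [Finset.sum_range_one]
      field_simp
      ring_nf
    · have := aux_integrable (-(m:ℝ) - 1) 0 hε
      simpa using this
  | succ n ih =>
    obtain ⟨c, hc⟩ := ih
    refine ⟨fun j => if j = n + 1 then 1 / m else ((n+1 : ℝ)/m) * c j, fun ε hε hε1 => ?_⟩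
    have hsub : ∀ x ∈ uIcc ε 1, (0:ℝ) < x := fun x hx => lt_of_lt_of_le (lt_min hε one_pos) hx.1
    -- integration by parts
    have hu : ∀ x ∈ uIcc ε 1, HasDerivAt (fun x : ℝ => Real.log x ^ (n+1))
        ((n+1 : ℝ) * Real.log x ^ n * x⁻¹) x := by
      intro x hx
      have := (Real.hasDerivAt_log (hsub x hx).ne').fun_pow (n+1)
      simpa using this
    have hv : ∀ x ∈ uIcc ε 1, HasDerivAt (fun x : ℝ => x ^ (-(m:ℝ)) / (-(m:ℝ)))
        (x ^ (-(m:ℝ) - 1)) x := fun x hx => aux_deriv_v m hm (hsub x hx)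
    have hu' : IntervalIntegrable (fun x : ℝ => (n+1 : ℝ) * Real.log x ^ n * x⁻¹) volume ε 1 := by
      apply ContinuousOn.intervalIntegrable
      intro x hx
      have hx0 : x ≠ 0 := (lt_of_lt_of_le (lt_min hε one_pos) hx.1).ne'
      exact ((continuousAt_const.mul ((Real.continuousAt_log hx0).pow n)).mul
        (continuousAt_inv₀ hx0)).continuousWithinAt
    have hv' : IntervalIntegrable (fun x : ℝ => x ^ (-(m:ℝ) - 1)) volume ε 1 := by
      have := aux_integrable (-(m:ℝ) - 1) 0 hε; simpa using this
    have parts := intervalIntegral.integral_mul_deriv_eq_deriv_mul hu hv hu' hv'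
    have hre : (fun t : ℝ => t ^ (-(m:ℝ) - 1) * Real.log t ^ (n+1))
        = fun t : ℝ => Real.log t ^ (n+1) * t ^ (-(m:ℝ) - 1) := by
      funext t; ring
    rw [hre, parts]
    -- the remaining integral
    have hcong : EqOn (fun x : ℝ => ((n+1:ℝ) * Real.log x ^ n * x⁻¹) * (x ^ (-(m:ℝ)) / (-(m:ℝ))))
        (fun x : ℝ => (-(n+1:ℝ)/m) * (x ^ (-(m:ℝ) - 1) * Real.log x ^ n)) (uIcc ε 1) := by
      intro x hx
      have hx0 : (0:ℝ) < x := hsub x hx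
      simp only
      rw [show (-(m:ℝ) - 1) = -(m:ℝ) + (-1) by ring, Real.rpow_add hx0,
        Real.rpow_neg_one]
      field_simp
    rw [intervalIntegral.integral_congr hcong, intervalIntegral.integral_const_mul,
      hc ε hε hε1]
    have hsum : ∑ j ∈ Finset.range (n+2),
        (if j = n + 1 then (1:ℝ) / m else ((n+1 : ℝ)/m) * c j) * Real.log ε ^ j
        = ((n+1 : ℝ)/m) * (∑ j ∈ Finset.range (n+1), c j * Real.log ε ^ j)
          + (1/(m:ℝ)) * Real.log ε ^ (n+1) := by
      rw [Finset.sum_range_succ, if_pos rfl, Finset.mul_sum]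
      congr 1
      refine Finset.sum_congr rfl fun j hj => ?_
      have := Finset.mem_range.mp hj
      rw [if_neg (by omega)]
      ring
    have hfac : ((n+1).factorial : ℝ) = (n+1) * n.factorial := by
      push_cast [Nat.factorial_succ]; ring
    show _ = ε ^ (-(m:ℝ)) * (∑ j ∈ Finset.range (n+2),
        (if j = n + 1 then (1:ℝ) / m else ((n+1 : ℝ)/m) * c j) * Real.log ε ^ j)
        - ((n+1).factorial : ℝ) / (m:ℝ) ^ (n+2)
    rw [hsum, Real.log_one, hfac]
    simp only [Real.one_rpow]
    field_simp
    ring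

theorem stmt0 (m n : ℕ) (hm : 1 ≤ m) (hn : 1 ≤ n) :
    NeutrixLim (fun ε => ∫ t in Set.Ioo ε 1, t ^ (-(m : ℝ) - 1) * Real.log t ^ n)
      (-(n.factorial : ℝ) / (m : ℝ) ^ (n + 1)) := by
  obtain ⟨c, hc⟩ := key m hm n
  have hinj : Function.Injective (fun j : ℕ => ((-(m:ℝ), j) : ℝ × ℕ)) := by
    intro a b hab
    simpa using congrArg Prod.snd hab
  set s : Finset (ℝ × ℕ) := (Finset.range (n+1)).image (fun j => (-(m:ℝ), j)) with hs
  refine ⟨fun ε => ∑ p ∈ s, c p.2 * ε ^ p.1 * Real.log ε ^ p.2, ⟨s, fun p => c p.2, ∅,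
    fun _ => 0, ?_, by simp, fun ε => by simp⟩, ?_⟩
  · intro p hp
    rw [hs, Finset.mem_image] at hp
    obtain ⟨j, _, rfl⟩ := hp
    simp only
    have : (0:ℝ) < m := by exact_mod_cast hm
    linarith
  · have hev : ∀ᶠ ε in nhdsWithin (0:ℝ) (Set.Ioi 0),
        (∫ t in Set.Ioo ε 1, t ^ (-(m : ℝ) - 1) * Real.log t ^ n)
          - (∑ p ∈ s, c p.2 * ε ^ p.1 * Real.log ε ^ p.2)
          = -(n.factorial : ℝ) / (m : ℝ) ^ (n + 1) := by
      filter_upwards [Ioo_mem_nhdsGT_of_mem (by constructor <;> norm_num : (0:ℝ) ∈ Ico (0:ℝ) 1)]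
        with ε hε
      have h1 : (∫ t in Set.Ioo ε 1, t ^ (-(m : ℝ) - 1) * Real.log t ^ n)
          = ∫ t in ε..1, t ^ (-(m:ℝ) - 1) * Real.log t ^ n := by
        rw [intervalIntegral.integral_of_le hε.2.le, MeasureTheory.integral_Ioc_eq_integral_Ioo]
      have h2 : (∑ p ∈ s, c p.2 * ε ^ p.1 * Real.log ε ^ p.2)
          = ε ^ (-(m:ℝ)) * (∑ j ∈ Finset.range (n+1), c j * Real.log ε ^ j) := by
        rw [hs, Finset.sum_image (fun a _ b _ h => hinj h), Finset.mul_sum]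
        exact Finset.sum_congr rfl fun j _ => by ring
      rw [h1, h2, hc ε hε.1 hε.2]
      ring
    exact Tendsto.congr' (hev.mono fun ε h => h.symm) tendsto_const_nhds
end

section
/- For every real x and all integers n ≥ 0, r ≥ 0, the neutrix limit as ε → 0⁺ of ∫_ε^{1/2} t^x (log t)^n (log(1−t))^r dt exists; that is, there exist a real number c and a negligible function N(ε) such that ∫_ε^{1/2} t^x (log t)^n (log(1−t))^r dt − N(ε) tends to c as ε → 0⁺. -/
open MeasureTheory Real Filter Set

lemma negligible_zero : Negligible (fun _ => (0:ℝ)) :=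
  ⟨∅, 0, ∅, 0, by simp, by simp, by simp⟩

lemma Negligible.add {N M : ℝ → ℝ} (hN : Negligible N) (hM : Negligible M) :
    Negligible (fun ε => N ε + M ε) := by
  obtain ⟨s₁, c₁, T₁, d₁, hs₁, hT₁, h₁⟩ := hN
  obtain ⟨s₂, c₂, T₂, d₂, hs₂, hT₂, h₂⟩ := hM
  classical
  refine ⟨s₁ ∪ s₂, (fun p => (if p ∈ s₁ then c₁ p else 0) + (if p ∈ s₂ then c₂ p else 0)),
    T₁ ∪ T₂, (fun k => (if k ∈ T₁ then d₁ k else 0) + (if k ∈ T₂ then d₂ k else 0)), ?_, ?_, ?_⟩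
  · intro p hp; rcases Finset.mem_union.1 hp with h | h
    exacts [hs₁ p h, hs₂ p h]
  · intro k hk; rcases Finset.mem_union.1 hk with h | h
    exacts [hT₁ k h, hT₂ k h]
  · intro ε
    have e1 : ∀ (s t : Finset (ℝ × ℕ)) (c : ℝ × ℕ → ℝ), s ⊆ t →
        ∑ p ∈ t, (if p ∈ s then c p else 0) * ε ^ p.1 * Real.log ε ^ p.2
          = ∑ p ∈ s, c p * ε ^ p.1 * Real.log ε ^ p.2 := by
      intro s t c hst
      rw [← Finset.sum_subset hst (fun p _ hps => by rw [if_neg hps, zero_mul, zero_mul])]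
      exact Finset.sum_congr rfl fun p hp => by rw [if_pos hp]
    have e2 : ∀ (s t : Finset ℕ) (d : ℕ → ℝ), s ⊆ t →
        ∑ k ∈ t, (if k ∈ s then d k else 0) * Real.log ε ^ k
          = ∑ k ∈ s, d k * Real.log ε ^ k := by
      intro s t d hst
      rw [← Finset.sum_subset hst (fun p _ hps => by rw [if_neg hps, zero_mul])]
      exact Finset.sum_congr rfl fun p hp => by rw [if_pos hp]
    simp only [add_mul, Finset.sum_add_distrib]
    rw [e1 s₁ _ c₁ Finset.subset_union_left, e1 s₂ _ c₂ Finset.subset_union_right,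
      e2 T₁ _ d₁ Finset.subset_union_left, e2 T₂ _ d₂ Finset.subset_union_right,
      h₁ ε, h₂ ε]
    ring

lemma Negligible.const_mul {N : ℝ → ℝ} (hN : Negligible N) (a : ℝ) :
    Negligible (fun ε => a * N ε) := by
  obtain ⟨s, c, T, d, hs, hT, h⟩ := hN
  refine ⟨s, fun p => a * c p, T, fun k => a * d k, hs, hT, fun ε => ?_⟩
  simp only []
  rw [h ε]
  rw [mul_add, Finset.mul_sum, Finset.mul_sum]
  congr 1
  · exact Finset.sum_congr rfl fun p _ => by ring
  · exact Finset.sum_congr rfl fun p _ => by ring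

lemma negligible_rpow_sum {lam : ℝ} (hlam : lam < 0) (K : ℕ) (b : ℕ → ℝ) :
    Negligible (fun ε => ∑ k ∈ Finset.range K, b k * ε ^ lam * Real.log ε ^ k) := by
  classical
  refine ⟨(Finset.range K).image (fun k => (lam, k)), fun p => b p.2, ∅, 0, ?_, by simp, ?_⟩
  · intro p hp
    obtain ⟨k, _, rfl⟩ := Finset.mem_image.1 hp
    exact hlam
  · intro ε
    rw [Finset.sum_image (by intro a _ b _ h; exact (Prod.ext_iff.1 h).2)]
    simp

lemma negligible_log_pow {k : ℕ} (hk : 1 ≤ k) (a : ℝ) :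
    Negligible (fun ε => a * Real.log ε ^ k) := by
  refine ⟨∅, 0, {k}, fun _ => a, by simp, by simpa using hk, fun ε => ?_⟩
  simp

lemma neutrixLim_of_tendsto {F : ℝ → ℝ} {c : ℝ}
    (h : Tendsto F (nhdsWithin 0 (Set.Ioi 0)) (nhds c)) : NeutrixLim F c :=
  ⟨fun _ => 0, negligible_zero, by simpa using h⟩

lemma NeutrixLim.add {F G : ℝ → ℝ} {c d : ℝ} (hF : NeutrixLim F c) (hG : NeutrixLim G d) :
    NeutrixLim (fun ε => F ε + G ε) (c + d) := by
  obtain ⟨N, hN, hNt⟩ := hF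
  obtain ⟨M, hM, hMt⟩ := hG
  exact ⟨fun ε => N ε + M ε, hN.add hM,
    by simpa using (hNt.add hMt).congr (fun ε => by ring)⟩

lemma NeutrixLim.const_mul {F : ℝ → ℝ} {c : ℝ} (hF : NeutrixLim F c) (a : ℝ) :
    NeutrixLim (fun ε => a * F ε) (a * c) := by
  obtain ⟨N, hN, hNt⟩ := hF
  exact ⟨fun ε => a * N ε, hN.const_mul a,
    (hNt.const_mul a).congr (fun ε => by ring)⟩

lemma NeutrixLim.congr {F G : ℝ → ℝ} {c : ℝ} (hF : NeutrixLim F c)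
    (h : ∀ᶠ ε in nhdsWithin (0:ℝ) (Set.Ioi 0), F ε = G ε) : NeutrixLim G c := by
  obtain ⟨N, hN, hNt⟩ := hF
  exact ⟨N, hN, hNt.congr' (h.mono fun ε hε => by rw [hε])⟩
lemma exists_antideriv {μ : ℝ} (hμ : μ ≠ -1) (n : ℕ) :
    ∃ (A : ℝ → ℝ) (b : ℕ → ℝ),
      (∀ t : ℝ, A t = ∑ k ∈ Finset.range (n+1), b k * t ^ (μ+1) * Real.log t ^ k) ∧
      ∀ t : ℝ, 0 < t → HasDerivAt A (t ^ μ * Real.log t ^ n) t := by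
  have hμ1 : μ + 1 ≠ 0 := by intro h; apply hμ; linarith
  induction n with
  | zero =>
    refine ⟨fun t => (μ+1)⁻¹ * t ^ (μ+1) * Real.log t ^ 0, fun _ => (μ+1)⁻¹,
      fun t => by rw [Finset.sum_range_one], fun t ht => ?_⟩
    have h1 : HasDerivAt (fun s : ℝ => s ^ (μ+1)) ((μ+1) * t ^ μ) t := by
      simpa using Real.hasDerivAt_rpow_const (p := μ+1) (Or.inl ht.ne')
    have h2 := h1.const_mul ((μ+1)⁻¹)
    simp only [pow_zero, mul_one]
    refine h2.congr_deriv ?_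
    field_simp
  | succ n ih =>
    obtain ⟨A, b, hshape, hderiv⟩ := ih
    refine ⟨fun t => (μ+1)⁻¹ * (t ^ (μ+1) * Real.log t ^ (n+1))
        - ((n+1 : ℝ) * (μ+1)⁻¹) * A t,
      fun k => if k = n+1 then (μ+1)⁻¹ else -((n+1:ℝ) * (μ+1)⁻¹) * b k, ?_, ?_⟩
    · intro t
      rw [Finset.sum_range_succ]
      simp only [↓reduceIte]
      have e : ∀ k ∈ Finset.range (n+1),
          (if k = n+1 then (μ+1)⁻¹ else -((n+1:ℝ)*(μ+1)⁻¹) * b k) * t ^ (μ+1) * Real.log t ^ k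
            = -((n+1:ℝ)*(μ+1)⁻¹) * (b k * t ^ (μ+1) * Real.log t ^ k) := by
        intro k hk
        rw [if_neg (by have := Finset.mem_range.1 hk; omega)]
        ring
      rw [Finset.sum_congr rfl e, ← Finset.mul_sum, ← hshape t]
      ring
    · intro t ht
      have h1 : HasDerivAt (fun s : ℝ => s ^ (μ+1)) ((μ+1) * t ^ μ) t := by
        simpa using Real.hasDerivAt_rpow_const (p := μ+1) (Or.inl ht.ne')
      have h2 : HasDerivAt (fun s : ℝ => Real.log s ^ (n+1))
          (((n+1 : ℕ) : ℝ) * Real.log t ^ n * t⁻¹) t := by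
        simpa using (Real.hasDerivAt_log ht.ne').fun_pow (n+1)
      have h3 := (h1.mul h2).const_mul ((μ+1)⁻¹)
      have h4 := (hderiv t ht).const_mul ((n+1 : ℝ) * (μ+1)⁻¹)
      have h5 := h3.sub h4
      refine h5.congr_deriv ?_
      have ht1 : t ^ (μ+1) = t ^ μ * t := Real.rpow_add_one ht.ne' μ
      rw [ht1]
      push_cast
      field_simp
      ring

lemma integral_monomial {μ : ℝ} {n : ℕ} {A : ℝ → ℝ}
    (hA : ∀ t : ℝ, 0 < t → HasDerivAt A (t ^ μ * Real.log t ^ n) t)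
    {ε : ℝ} (hε : 0 < ε) (hε2 : ε < 1/2) :
    ∫ t in Ioo ε (1/2 : ℝ), t ^ μ * Real.log t ^ n = A (1/2) - A ε := by
  rw [← integral_Ioc_eq_integral_Ioo, ← intervalIntegral.integral_of_le hε2.le]
  apply intervalIntegral.integral_eq_sub_of_hasDerivAt
  · intro t ht
    rw [uIcc_of_le hε2.le] at ht
    exact hA t (lt_of_lt_of_le hε ht.1)
  · apply ContinuousOn.intervalIntegrable
    intro t ht
    rw [uIcc_of_le hε2.le] at ht
    have ht0 : t ≠ 0 := (lt_of_lt_of_le hε ht.1).ne'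
    exact ((Real.continuousAt_rpow_const t μ (Or.inl ht0)).mul
      ((Real.continuousAt_log ht0).pow n)).continuousWithinAt

lemma neutrix_monomial {μ : ℝ} (hμ : μ ≤ -1) (n : ℕ) :
    ∃ c : ℝ, NeutrixLim (fun ε => ∫ t in Ioo ε (1/2 : ℝ), t ^ μ * Real.log t ^ n) c := by
  rcases eq_or_lt_of_le hμ with heq | hlt
  · -- μ = -1
    subst heq
    set A : ℝ → ℝ := fun t => ((n:ℝ)+1)⁻¹ * Real.log t ^ (n+1) with hAdef
    have hA : ∀ t : ℝ, 0 < t → HasDerivAt A (t ^ (-1 : ℝ) * Real.log t ^ n) t := by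
      intro t ht
      have h2 := ((Real.hasDerivAt_log ht.ne').pow (n+1)).const_mul (((n:ℝ)+1)⁻¹)
      refine h2.congr_deriv ?_
      rw [Real.rpow_neg_one]
      push_cast
      have hn : ((n:ℝ)+1) ≠ 0 := by positivity
      field_simp
    refine ⟨A (1/2), fun ε => -(((n:ℝ)+1)⁻¹) * Real.log ε ^ (n+1),
      negligible_log_pow (by omega) _, ?_⟩
    apply Tendsto.congr' _ (tendsto_const_nhds (x := A (1/2)))
    filter_upwards [Ioo_mem_nhdsGT_of_mem (by norm_num : (0:ℝ) ∈ Ico (0:ℝ) (1/2))] with ε hε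
    rw [integral_monomial hA hε.1 hε.2, hAdef]
    ring
  · -- μ < -1
    obtain ⟨A, b, hshape, hderiv⟩ := exists_antideriv (by linarith : μ ≠ -1) n
    refine ⟨A (1/2), fun ε => ∑ k ∈ Finset.range (n+1), (-(b k)) * ε ^ (μ+1) * Real.log ε ^ k,
      negligible_rpow_sum (by linarith) _ _, ?_⟩
    apply Tendsto.congr' _ (tendsto_const_nhds (x := A (1/2)))
    filter_upwards [Ioo_mem_nhdsGT_of_mem (by norm_num : (0:ℝ) ∈ Ico (0:ℝ) (1/2))] with ε hε
    rw [integral_monomial hderiv hε.1 hε.2, hshape ε]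
    have hS : (∑ k ∈ Finset.range (n+1), (-(b k)) * ε ^ (μ+1) * Real.log ε ^ k)
        = -∑ k ∈ Finset.range (n+1), b k * ε ^ (μ+1) * Real.log ε ^ k := by
      rw [← Finset.sum_neg_distrib]
      exact Finset.sum_congr rfl fun k _ => by ring
    rw [hS]
    ring
lemma integrableOn_aux {x : ℝ} (hx : -1 < x) (n : ℕ) {g : ℝ → ℝ}
    (hg : ContinuousOn g (Icc 0 (1/2 : ℝ))) :
    IntegrableOn (fun t => t ^ x * Real.log t ^ n * g t) (Ioo 0 (1/2 : ℝ)) := by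
  obtain ⟨C, hC⟩ := isCompact_Icc.exists_bound_of_continuousOn hg
  have hC0 : 0 ≤ C := le_trans (norm_nonneg _) (hC 0 (by constructor <;> norm_num))
  set e : ℝ := (x+1)/(2*((n:ℝ)+1)) with he
  have he0 : 0 < e := div_pos (by linarith) (by positivity)
  set y : ℝ := x - e * n with hy
  have hen : e * n = (x+1)/2 - e := by
    rw [he]; field_simp; ring
  have hy1 : -1 < y := by
    rw [hy]; rw [hen]; linarith
  have hyInt : IntegrableOn (fun t => t ^ y) (Ioo (0:ℝ) (1/2)) :=
    (intervalIntegral.integrableOn_Ioo_rpow_iff (by norm_num)).2 hy1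
  apply Integrable.mono' ((hyInt.const_mul (C * (e⁻¹)^n)))
  · apply ContinuousOn.aestronglyMeasurable _ measurableSet_Ioo
    apply ContinuousOn.mul
    apply ContinuousOn.mul
    · exact fun t ht => (Real.continuousAt_rpow_const t x (Or.inl ht.1.ne')).continuousWithinAt
    · exact fun t ht => ((Real.continuousAt_log ht.1.ne').pow n).continuousWithinAt
    · exact hg.mono Ioo_subset_Icc_self
  · filter_upwards [ae_restrict_mem measurableSet_Ioo] with t ht
    have ht0 : 0 < t := ht.1
    have ht1 : t < 1 := by have := ht.2; linarith
    have hlog : |Real.log t| ≤ t ^ (-e) * e⁻¹ := by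
      rw [abs_of_nonpos (Real.log_nonpos ht0.le ht1.le)]
      have h1 := Real.log_le_rpow_div (x := t⁻¹) (by positivity) he0
      rw [Real.log_inv, Real.inv_rpow ht0.le, ← Real.rpow_neg ht0.le, div_eq_mul_inv] at h1
      exact h1
    have hb1 : |Real.log t| ^ n ≤ (t ^ (-e) * e⁻¹) ^ n :=
      pow_le_pow_left₀ (abs_nonneg _) hlog n
    have hgt : |g t| ≤ C := hC t (Ioo_subset_Icc_self ht)
    have key : (t ^ (-e) * e⁻¹) ^ n = t ^ (-(e * n)) * (e⁻¹) ^ n := by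
      rw [mul_pow, ← Real.rpow_natCast (t ^ (-e)) n, ← Real.rpow_mul ht0.le]
      ring_nf
    have hxy : t ^ x * t ^ (-(e * n)) = t ^ y := by
      rw [← Real.rpow_add ht0, hy]; ring_nf
    calc ‖t ^ x * Real.log t ^ n * g t‖
        = t ^ x * |Real.log t| ^ n * |g t| := by
          rw [Real.norm_eq_abs, abs_mul, abs_mul, abs_pow,
            abs_of_nonneg (Real.rpow_nonneg ht0.le x)]
      _ ≤ t ^ x * (t ^ (-e) * e⁻¹) ^ n * C := by
          apply mul_le_mul _ hgt (abs_nonneg _) (by positivity)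
          exact mul_le_mul_of_nonneg_left hb1 (Real.rpow_nonneg ht0.le x)
      _ = C * (e⁻¹) ^ n * t ^ y := by
          rw [key, ← mul_assoc, hxy.symm]; ring

lemma tendsto_base {x : ℝ} (hx : -1 < x) (n : ℕ) {g : ℝ → ℝ}
    (hg : ContinuousOn g (Icc 0 (1/2 : ℝ))) :
    Tendsto (fun ε => ∫ t in Ioo ε (1/2 : ℝ), t ^ x * Real.log t ^ n * g t)
      (nhdsWithin 0 (Set.Ioi 0))
      (nhds (∫ t in Ioo 0 (1/2 : ℝ), t ^ x * Real.log t ^ n * g t)) := by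
  set f : ℝ → ℝ := fun t => t ^ x * Real.log t ^ n * g t with hf
  have hint : IntegrableOn f (Ioo 0 (1/2 : ℝ)) := integrableOn_aux hx n hg
  have key : ∀ᶠ ε in nhdsWithin (0:ℝ) (Set.Ioi 0),
      (∫ t in Ioo (0:ℝ) (1/2 : ℝ), f t) - (∫ t in Ioc (0:ℝ) ε, f t ∂(volume.restrict (Ioo 0 (1/2:ℝ))))
        = ∫ t in Ioo ε (1/2 : ℝ), f t := by
    filter_upwards [Ioo_mem_nhdsGT_of_mem (by norm_num : (0:ℝ) ∈ Ico (0:ℝ) (1/2))] with ε hε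
    have hss : Ioc (0:ℝ) ε ⊆ Ioo (0:ℝ) (1/2) := fun t ⟨h1, h2⟩ => ⟨h1, lt_of_le_of_lt h2 hε.2⟩
    have hrr : (∫ t in Ioc (0:ℝ) ε, f t ∂(volume.restrict (Ioo 0 (1/2:ℝ))))
        = ∫ t in Ioc (0:ℝ) ε, f t := by
      rw [Measure.restrict_restrict measurableSet_Ioc, inter_eq_self_of_subset_left hss]
    rw [hrr]
    have hunion : Ioc (0:ℝ) ε ∪ Ioo ε (1/2 : ℝ) = Ioo (0:ℝ) (1/2) :=
      Ioc_union_Ioo_eq_Ioo hε.1.le hε.2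
    have hdisj : Disjoint (Ioc (0:ℝ) ε) (Ioo ε (1/2:ℝ)) := by
      rw [Set.disjoint_left]
      rintro t ⟨_, h2⟩ ⟨h3, _⟩
      exact absurd h3 (not_lt.2 h2)
    rw [← hunion, setIntegral_union hdisj measurableSet_Ioo (hint.mono_set hss)
      (hint.mono_set (Ioo_subset_Ioo_left hε.1.le))]
    ring
  have h0 : Tendsto (fun ε : ℝ => ∫ t in Ioc (0:ℝ) ε, f t ∂(volume.restrict (Ioo 0 (1/2:ℝ))))
      (nhdsWithin 0 (Set.Ioi 0)) (nhds 0) := by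
    apply hint.tendsto_setIntegral_nhds_zero
    have hb : ∀ ε : ℝ, (volume.restrict (Ioo (0:ℝ) (1/2))) (Ioc 0 ε) ≤ ENNReal.ofReal ε := by
      intro ε
      calc (volume.restrict (Ioo (0:ℝ) (1/2))) (Ioc 0 ε) ≤ volume (Ioc (0:ℝ) ε) :=
            Measure.restrict_le_self _
        _ = ENNReal.ofReal ε := by rw [Real.volume_Ioc, sub_zero]
    have hof : Tendsto (fun ε : ℝ => ENNReal.ofReal ε) (nhdsWithin 0 (Set.Ioi 0)) (nhds 0) := by
      have := (ENNReal.tendsto_ofReal (tendsto_id (x := nhds (0:ℝ))))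
      simpa using this.mono_left nhdsWithin_le_nhds
    exact tendsto_of_tendsto_of_tendsto_of_le_of_le tendsto_const_nhds hof
      (fun ε => zero_le) hb
  have := (tendsto_const_nhds (x := ∫ t in Ioo (0:ℝ) (1/2:ℝ), f t)).sub h0
  rw [sub_zero] at this
  exact this.congr' key
lemma analyticAt_rlog {t : ℝ} (ht : 0 < t) : AnalyticAt ℝ Real.log t := by
  have hlog : AnalyticAt ℝ Complex.log ((t:ℝ) : ℂ) :=
    (analyticAt_clog (Complex.ofReal_mem_slitPlane.2 ht)).restrictScalars
  have h1 : AnalyticAt ℝ (fun y : ℝ => (Complex.log ((y:ℝ) : ℂ)).re) t :=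
    (Complex.reCLM.analyticAt _).comp (hlog.comp (Complex.ofRealCLM.analyticAt t))
  have : Real.log = fun y : ℝ => (Complex.log ((y:ℝ) : ℂ)).re := by
    funext y; rw [Complex.log_ofReal_re]
  rw [this]
  exact h1

lemma analyticOnNhd_integrand (r : ℕ) :
    AnalyticOnNhd ℝ (fun t : ℝ => Real.log (1 - t) ^ r) (Iio (1:ℝ)) := by
  intro t ht
  have h1 : AnalyticAt ℝ (fun s : ℝ => 1 - s) t := analyticAt_const.sub (analyticAt_id)
  have h2 : AnalyticAt ℝ (fun s : ℝ => Real.log (1 - s)) t :=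
    (analyticAt_rlog (by have := mem_Iio.1 ht; linarith)).comp h1
  exact h2.pow r

lemma analyticOnNhd_dslope {g : ℝ → ℝ} (hg : AnalyticOnNhd ℝ g (Iio (1:ℝ))) :
    AnalyticOnNhd ℝ (dslope g 0) (Iio (1:ℝ)) := by
  intro t ht
  rcases eq_or_ne t 0 with rfl | hne
  · obtain ⟨p, hp⟩ := hg 0 (by norm_num)
    exact hp.has_fpower_series_dslope_fslope.analyticAt
  · have hinv : AnalyticAt ℝ (fun s : ℝ => (s - 0)⁻¹) t := by
      have h0 : AnalyticAt ℝ (fun s : ℝ => s - 0) t :=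
        (analyticAt_id).sub analyticAt_const
      exact (analyticAt_inv (by simpa using hne)).comp h0
    have h1 : AnalyticAt ℝ (fun s => (g s - g 0) * (s - 0)⁻¹) t :=
      ((hg t ht).sub analyticAt_const).mul hinv
    apply h1.congr
    filter_upwards [eventually_ne_nhds hne] with s hs
    rw [dslope_of_ne g hs, slope_def_field, div_eq_mul_inv]

lemma dslope_identity {g : ℝ → ℝ} {t : ℝ} (ht : t ≠ 0) :
    g t = g 0 + t * dslope g 0 t := by
  rw [dslope_of_ne g ht, slope_def_field]
  field_simp
  ring
lemma base_neutrix {x : ℝ} (hx : -1 < x) (n : ℕ) {g : ℝ → ℝ}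
    (hg : AnalyticOnNhd ℝ g (Iio (1:ℝ))) :
    ∃ c : ℝ, NeutrixLim (fun ε => ∫ t in Ioo ε (1/2 : ℝ),
      t ^ x * Real.log t ^ n * g t) c := by
  have hgc : ContinuousOn g (Icc 0 (1/2 : ℝ)) :=
    (hg.continuousOn).mono (fun t ht => lt_of_le_of_lt ht.2 (by norm_num))
  exact ⟨_, neutrixLim_of_tendsto (tendsto_base hx n hgc)⟩

lemma main_induction (m : ℕ) : ∀ (x : ℝ), -1 < x + m → ∀ (n : ℕ) (g : ℝ → ℝ),
    AnalyticOnNhd ℝ g (Iio (1:ℝ)) →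
    ∃ c : ℝ, NeutrixLim (fun ε => ∫ t in Ioo ε (1/2 : ℝ),
      t ^ x * Real.log t ^ n * g t) c := by
  induction m with
  | zero =>
    intro x hx n g hg
    exact base_neutrix (by simpa using hx) n hg
  | succ m ih =>
    intro x hx n g hg
    by_cases hx1 : -1 < x
    · exact base_neutrix hx1 n hg
    push_neg at hx1
    set ψ : ℝ → ℝ := dslope g 0 with hψdef
    have hψ : AnalyticOnNhd ℝ ψ (Iio (1:ℝ)) := analyticOnNhd_dslope hg
    obtain ⟨c₁, h₁⟩ := neutrix_monomial hx1 n
    obtain ⟨c₂, h₂⟩ := ih (x+1) (by push_cast at hx ⊢; linarith) n ψ hψ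
    refine ⟨g 0 * c₁ + c₂, ?_⟩
    apply ((h₁.const_mul (g 0)).add h₂).congr
    filter_upwards [Ioo_mem_nhdsGT_of_mem (by norm_num : (0:ℝ) ∈ Ico (0:ℝ) (1/2))] with ε hε
    have hIccIio : Icc ε (1/2:ℝ) ⊆ Iio (1:ℝ) := fun t ht => lt_of_le_of_lt ht.2 (by norm_num)
    have hInt1 : IntegrableOn (fun t => g 0 * (t ^ x * Real.log t ^ n)) (Ioo ε (1/2:ℝ)) := by
      apply ((ContinuousOn.integrableOn_Icc ?_).mono_set Ioo_subset_Icc_self)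
      intro t ht
      have ht0 : t ≠ 0 := (lt_of_lt_of_le hε.1 ht.1).ne'
      exact (continuousAt_const.mul ((Real.continuousAt_rpow_const t x (Or.inl ht0)).mul
        ((Real.continuousAt_log ht0).pow n))).continuousWithinAt
    have hInt2 : IntegrableOn (fun t => t ^ (x+1) * Real.log t ^ n * ψ t) (Ioo ε (1/2:ℝ)) := by
      apply ((ContinuousOn.integrableOn_Icc ?_).mono_set Ioo_subset_Icc_self)
      apply ContinuousOn.mul _ ((hψ.continuousOn).mono hIccIio)
      intro t ht
      have ht0 : t ≠ 0 := (lt_of_lt_of_le hε.1 ht.1).ne'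
      exact ((Real.continuousAt_rpow_const t (x+1) (Or.inl ht0)).mul
        ((Real.continuousAt_log ht0).pow n)).continuousWithinAt
    have heq : ∀ t ∈ Ioo ε (1/2:ℝ),
        t ^ x * Real.log t ^ n * g t
          = g 0 * (t ^ x * Real.log t ^ n) + t ^ (x+1) * Real.log t ^ n * ψ t := by
      intro t ht
      have ht0 : t ≠ 0 := (lt_of_lt_of_le hε.1 ht.1.le).ne'
      rw [Real.rpow_add_one ht0, hψdef]
      nth_rewrite 1 [dslope_identity (g := g) ht0]
      ring
    calc g 0 * (∫ t in Ioo ε (1/2:ℝ), t ^ x * Real.log t ^ n)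
          + (∫ t in Ioo ε (1/2:ℝ), t ^ (x+1) * Real.log t ^ n * ψ t)
        = (∫ t in Ioo ε (1/2:ℝ), g 0 * (t ^ x * Real.log t ^ n))
          + (∫ t in Ioo ε (1/2:ℝ), t ^ (x+1) * Real.log t ^ n * ψ t) := by
          rw [MeasureTheory.integral_const_mul]
      _ = ∫ t in Ioo ε (1/2:ℝ), (g 0 * (t ^ x * Real.log t ^ n)
            + t ^ (x+1) * Real.log t ^ n * ψ t) := (integral_add hInt1 hInt2).symm
      _ = ∫ t in Ioo ε (1/2:ℝ), t ^ x * Real.log t ^ n * g t := by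
          apply setIntegral_congr_fun measurableSet_Ioo
          intro t ht
          exact (heq t ht).symm

theorem stmt6 (x : ℝ) (n r : ℕ) :
    ∃ c : ℝ, NeutrixLim (fun ε => ∫ t in Set.Ioo ε (1/2 : ℝ),
      t ^ x * Real.log t ^ n * Real.log (1 - t) ^ r) c := by
  have hm : -1 < x + ((⌈-x⌉₊ + 1 : ℕ) : ℝ) := by
    have := Nat.le_ceil (-x)
    push_cast
    linarith
  exact main_induction (⌈-x⌉₊ + 1) x hm n _ (analyticOnNhd_integrand r)
end
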